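/- arXiv:1903.06470 — 2 statements merged into one kernel-verified Lean document; each statement's English description precedes it below -/
import Mathlib

section
/- For any real θ̄ > 0 and t̄ > 0, the affine function A(θ, t) = [2/t̄ · ln(1 + 1/θ̄) + 1/((θ̄+1) t̄)] − θ/(θ̄(θ̄+1) t̄) − (1/t̄²) ln(1 + 1/θ̄) · t is a lower bound for g(θ, t) = (1/t) ln(1 + 1/θ) on the domain θ > 0, t > 0, with equality at (θ̄, t̄). -/
open Real

lemma hlog_pos {θ : ℝ} (hθ : 0 < θ) : 0 < Real.log (1 + 1/θ) :=
  Real.log_pos (by nlinarith [one_div_pos.mpr hθ])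

lemma hlog_ge {θ : ℝ} (hθ : 0 < θ) : 1/(θ+1) ≤ Real.log (1 + 1/θ) := by
  have h1 : (0:ℝ) < θ/(θ+1) := by positivity
  have h2 := Real.log_le_sub_one_of_pos h1
  have h3 : Real.log (θ/(θ+1)) = Real.log θ - Real.log (θ+1) :=
    Real.log_div (ne_of_gt hθ) (by positivity)
  have h4 : Real.log (1 + 1/θ) = Real.log (θ+1) - Real.log θ := by
    rw [show (1:ℝ) + 1/θ = (θ+1)/θ by field_simp]
    exact Real.log_div (by positivity) (ne_of_gt hθ)
  have h5 : θ/(θ+1) - 1 = -(1/(θ+1)) := by field_simp; ring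
  rw [h3, h5] at h2
  rw [h4]; linarith

lemma hasDerivAt_h {θ : ℝ} (hθ : 0 < θ) :
    HasDerivAt (fun x : ℝ => Real.log (1 + 1/x)) (-(1/(θ*(θ+1)))) θ := by
  have h1 : HasDerivAt (fun x : ℝ => 1 + 1/x) (-(1/θ^2)) θ := by
    simpa [one_div] using ((hasDerivAt_inv (ne_of_gt hθ)).const_add 1)
  have hne : (1:ℝ) + 1/θ ≠ 0 := by positivity
  have h2 := h1.log hne
  convert h2 using 1
  field_simp

noncomputable def qfun (θ : ℝ) : ℝ := θ^2*(θ+1)^2*Real.log (1 + 1/θ)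

lemma hasDerivAt_q {θ : ℝ} (hθ : 0 < θ) :
    HasDerivAt qfun (θ*(θ+1)*(2*(2*θ+1)*Real.log (1 + 1/θ) - 1)) θ := by
  have hu : HasDerivAt (fun x : ℝ => x^2*(x+1)^2)
      (2*θ*(θ+1)^2 + θ^2*(2*(θ+1))) θ := by
    have := ((hasDerivAt_pow 2 θ).mul (((hasDerivAt_id θ).add_const 1).pow 2))
    simp only [id_eq, Pi.pow_apply] at this
    refine this.congr_deriv ?_
    ring
  have := hu.mul (hasDerivAt_h hθ)
  refine this.congr_deriv ?_
  have h1 : θ ≠ 0 := ne_of_gt hθ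
  have h2 : θ + 1 ≠ 0 := by positivity
  field_simp
  ring

-- monotone version
lemma q_mono' {x y : ℝ} (hx : 0 < x) (hxy : x ≤ y) : qfun x ≤ qfun y := by
  have cont : ContinuousOn qfun (Set.Icc x y) := fun z hz => by
    have hz0 : 0 < z := lt_of_lt_of_le hx hz.1
    exact ((hasDerivAt_q hz0).differentiableAt.continuousAt).continuousWithinAt
  have := monotoneOn_of_deriv_nonneg (convex_Icc x y) cont
    (fun z hz => by
      rw [interior_Icc] at hz
      exact ((hasDerivAt_q (lt_of_lt_of_le hx (le_of_lt hz.1))).differentiableAt).differentiableWithinAt)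
    (fun z hz => by
      rw [interior_Icc] at hz
      have hz0 : 0 < z := lt_of_lt_of_le hx (le_of_lt hz.1)
      rw [(hasDerivAt_q hz0).deriv]
      have h1 := hlog_ge hz0
      have h6 : 1 ≤ 2*(2*z+1)*(1/(z+1)) := by
        rw [mul_one_div, le_div_iff₀ (by linarith)]
        nlinarith
      have h7 := mul_le_mul_of_nonneg_left h1 (show (0:ℝ) ≤ 2*(2*z+1) by linarith)
      nlinarith [mul_pos hz0 (show (0:ℝ) < z+1 by linarith)])
  exact this (Set.left_mem_Icc.mpr hxy) (Set.right_mem_Icc.mpr hxy) hxy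

lemma sqrt_q {x : ℝ} (hx : 0 < x) :
    Real.sqrt (qfun x) = x*(x+1)*Real.sqrt (Real.log (1 + 1/x)) := by
  unfold qfun
  rw [show x^2*(x+1)^2 = (x*(x+1))^2 by ring, Real.sqrt_mul (sq_nonneg _),
    Real.sqrt_sq (by positivity)]

noncomputable def wfun (θb x : ℝ) : ℝ :=
  2*Real.sqrt (Real.log (1+1/θb))*Real.sqrt (Real.log (1+1/x)) + x/(θb*(θb+1))

lemma hasDerivAt_w (θb : ℝ) {x : ℝ} (hx : 0 < x) :
    HasDerivAt (wfun θb)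
      (2*Real.sqrt (Real.log (1+1/θb)) *
        (1/(2*Real.sqrt (Real.log (1+1/x))) * (-(1/(x*(x+1))))) + 1/(θb*(θb+1))) x := by
  have hs := (Real.hasDerivAt_sqrt (ne_of_gt (hlog_pos hx))).comp x (hasDerivAt_h hx)
  have := (hs.const_mul (2*Real.sqrt (Real.log (1+1/θb)))).add
    ((hasDerivAt_id x).div_const (θb*(θb+1)))
  exact this

lemma w_deriv_eq (θb : ℝ) (hθb : 0 < θb) {x : ℝ} (hx : 0 < x) :
    2*Real.sqrt (Real.log (1+1/θb)) *
        (1/(2*Real.sqrt (Real.log (1+1/x))) * (-(1/(x*(x+1))))) + 1/(θb*(θb+1))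
      = 1/(θb*(θb+1)) - Real.sqrt (Real.log (1+1/θb))/(x*(x+1)*Real.sqrt (Real.log (1+1/x))) := by
  have h1 : Real.sqrt (Real.log (1+1/x)) ≠ 0 :=
    ne_of_gt (Real.sqrt_pos.mpr (hlog_pos hx))
  have h2 : x ≠ 0 := ne_of_gt hx
  have h3 : x + 1 ≠ 0 := by positivity
  set A := Real.sqrt (Real.log (1+1/θb)) with hA
  set B := Real.sqrt (Real.log (1+1/x)) with hB
  field_simp
  ring

lemma key_ineq (θb : ℝ) (hθb : 0 < θb) {θ : ℝ} (hθ : 0 < θ) :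
    2*Real.log (1+1/θb) + (θb-θ)/(θb*(θb+1)) ≤
      2*Real.sqrt (Real.log (1+1/θb))*Real.sqrt (Real.log (1+1/θ)) := by
  have hL := hlog_pos hθb
  have sign : ∀ z : ℝ, 0 < z →
      (deriv (wfun θb) z =
        1/(θb*(θb+1)) - Real.sqrt (Real.log (1+1/θb))/(z*(z+1)*Real.sqrt (Real.log (1+1/z)))) := by
    intro z hz
    rw [(hasDerivAt_w θb hz).deriv, w_deriv_eq θb hθb hz]
  have cont : ∀ s : Set ℝ, s ⊆ Set.Ioi 0 → ContinuousOn (wfun θb) s := by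
    intro s hs z hz
    exact ((hasDerivAt_w θb (hs hz)).differentiableAt.continuousAt).continuousWithinAt
  have diff : ∀ z : ℝ, 0 < z → DifferentiableAt ℝ (wfun θb) z := fun z hz =>
    (hasDerivAt_w θb hz).differentiableAt
  -- m z := z*(z+1)*sqrt(log(1+1/z)) = sqrt (qfun z), monotone
  have mq : ∀ z : ℝ, 0 < z → z*(z+1)*Real.sqrt (Real.log (1+1/z)) = Real.sqrt (qfun z) :=
    fun z hz => (sqrt_q hz).symm
  have mθb : θb*(θb+1)*Real.sqrt (Real.log (1+1/θb)) = Real.sqrt (qfun θb) := mq θb hθb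
  suffices h : wfun θb θb ≤ wfun θb θ by
    unfold wfun at h
    have hLs : Real.sqrt (Real.log (1+1/θb)) * Real.sqrt (Real.log (1+1/θb))
        = Real.log (1+1/θb) := Real.mul_self_sqrt hL.le
    have hsplit : (θb-θ)/(θb*(θb+1)) = θb/(θb*(θb+1)) - θ/(θb*(θb+1)) := by ring
    rw [hsplit]
    nlinarith [h]
  rcases le_total θ θb with hle | hle
  · have anti := antitoneOn_of_deriv_nonpos (convex_Icc θ θb)
      (cont _ (fun z hz => lt_of_lt_of_le hθ hz.1))
      (fun z hz => by
        rw [interior_Icc] at hz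
        exact (diff z (lt_trans hθ hz.1)).differentiableWithinAt)
      (fun z hz => by
        rw [interior_Icc] at hz
        have hz0 : 0 < z := lt_trans hθ hz.1
        rw [sign z hz0]
        have hm : Real.sqrt (qfun z) ≤ Real.sqrt (qfun θb) :=
          Real.sqrt_le_sqrt (q_mono' hz0 hz.2.le)
        rw [← mq z hz0, ← mθb] at hm
        have hmpos : 0 < z*(z+1)*Real.sqrt (Real.log (1+1/z)) := by
          have := hlog_pos hz0
          positivity
        rw [sub_nonpos, div_le_div_iff₀ (by positivity) hmpos]
        calc 1 * (z*(z+1)*Real.sqrt (Real.log (1+1/z)))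
            ≤ 1 * (θb*(θb+1)*Real.sqrt (Real.log (1+1/θb))) := by nlinarith
          _ = Real.sqrt (Real.log (1+1/θb)) * (θb*(θb+1)) := by ring)
    exact anti (Set.left_mem_Icc.mpr hle) (Set.right_mem_Icc.mpr hle) hle
  · have mono := monotoneOn_of_deriv_nonneg (convex_Icc θb θ)
      (cont _ (fun z hz => lt_of_lt_of_le hθb hz.1))
      (fun z hz => by
        rw [interior_Icc] at hz
        exact (diff z (lt_trans hθb hz.1)).differentiableWithinAt)
      (fun z hz => by
        rw [interior_Icc] at hz
        have hz0 : 0 < z := lt_trans hθb hz.1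
        rw [sign z hz0]
        have hm : Real.sqrt (qfun θb) ≤ Real.sqrt (qfun z) :=
          Real.sqrt_le_sqrt (q_mono' hθb hz.1.le)
        rw [← mq z hz0, ← mθb] at hm
        have hmpos : 0 < z*(z+1)*Real.sqrt (Real.log (1+1/z)) := by
          have := hlog_pos hz0
          positivity
        rw [sub_nonneg, div_le_div_iff₀ hmpos (by positivity)]
        calc Real.sqrt (Real.log (1+1/θb)) * (θb*(θb+1))
            = 1 * (θb*(θb+1)*Real.sqrt (Real.log (1+1/θb))) := by ring
          _ ≤ 1 * (z*(z+1)*Real.sqrt (Real.log (1+1/z))) := by nlinarith)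
    exact mono (Set.left_mem_Icc.mpr hle) (Set.right_mem_Icc.mpr hle) hle

/-- For `θ̄ > 0`, `t̄ > 0`, the affine function
`A(θ,t) = 2/t̄·ln(1+1/θ̄) + 1/((θ̄+1)t̄) − θ/(θ̄(θ̄+1)t̄) − (1/t̄²)·ln(1+1/θ̄)·t`
is a lower bound of `g(θ,t) = ln(1+1/θ)/t` on `θ > 0, t > 0`, with equality at `(θ̄,t̄)`. -/
theorem stmt_5 (θb tb : ℝ) (hθb : 0 < θb) (htb : 0 < tb) :
    (2 / tb * Real.log (1 + 1 / θb) + 1 / ((θb + 1) * tb)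
        - θb / (θb * (θb + 1) * tb) - (1 / tb ^ 2) * Real.log (1 + 1 / θb) * tb
      = Real.log (1 + 1 / θb) / tb) ∧
    ∀ θ t : ℝ, 0 < θ → 0 < t →
      2 / tb * Real.log (1 + 1 / θb) + 1 / ((θb + 1) * tb)
        - θ / (θb * (θb + 1) * tb) - (1 / tb ^ 2) * Real.log (1 + 1 / θb) * t
      ≤ Real.log (1 + 1 / θ) / t := by
  have hθb0 : θb ≠ 0 := ne_of_gt hθb
  have hθb1 : θb + 1 ≠ 0 := by positivity
  have htb0 : tb ≠ 0 := ne_of_gt htb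
  constructor
  · field_simp
    ring
  · intro θ t hθ ht
    have hL := hlog_pos hθb
    have hM := hlog_pos hθ
    set L := Real.log (1 + 1/θb) with hLdef
    set M := Real.log (1 + 1/θ) with hMdef
    set d := (θb - θ)/(θb*(θb+1)) with hddef
    have key := key_ineq θb hθb hθ
    have hquad : 0 ≤ L*t^2 - (2*L+d)*tb*t + M*tb^2 := by
      rcases le_or_gt (2*L+d) 0 with hB | hB
      · nlinarith [mul_pos ht htb, sq_nonneg t, sq_nonneg tb, mul_pos hL (mul_pos ht ht),
          mul_pos hM (mul_pos htb htb)]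
      · have hsq : (2*L+d)^2 ≤ 4*L*M := by
          have h2 := mul_self_le_mul_self hB.le key
          nlinarith [h2, Real.mul_self_sqrt hL.le, Real.mul_self_sqrt hM.le]
        nlinarith [sq_nonneg (2*L*t - (2*L+d)*tb), sq_nonneg tb, hL]
    have hdiff : M/t - (2/tb*L + 1/((θb+1)*tb) - θ/(θb*(θb+1)*tb) - (1/tb^2)*L*t)
        = (L*t^2 - (2*L+d)*tb*t + M*tb^2)/(t*tb^2) := by
      rw [hddef]
      field_simp
      ring
    have hpos : (0:ℝ) ≤ (L*t^2 - (2*L+d)*tb*t + M*tb^2)/(t*tb^2) :=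
      div_nonneg hquad (by positivity)
    linarith
end

section
/- The function g(θ, t) = ln(1 + 1/θ)/t is jointly convex on the domain {(θ, t) : θ > 0, t > 0}. -/
open Set Real

private lemma logpos {θ : ℝ} (hθ : 0 < θ) : 0 < Real.log (1 + θ⁻¹) :=
  Real.log_pos (by nlinarith [inv_pos.2 hθ])

private lemma aux_hasDeriv {θ : ℝ} (hθ : 0 < θ) :
    HasDerivAt (fun θ : ℝ => Real.log (Real.log (1 + θ⁻¹)))
      (-(((θ^2+θ) * Real.log (1+θ⁻¹))⁻¹)) θ := by
  have hθ0 : θ ≠ 0 := ne_of_gt hθ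
  have h1 : HasDerivAt (fun θ : ℝ => 1 + θ⁻¹) (-(θ^2)⁻¹) θ := by
    simpa using (hasDerivAt_inv hθ0).const_add 1
  have h1pos : (0:ℝ) < 1 + θ⁻¹ := by positivity
  have h2 : HasDerivAt (fun θ : ℝ => Real.log (1 + θ⁻¹)) (-(θ^2)⁻¹ / (1+θ⁻¹)) θ :=
    h1.log (ne_of_gt h1pos)
  have h3 := h2.log (ne_of_gt (logpos hθ))
  convert h3 using 1
  have hLpos := logpos hθ
  set L := Real.log (1+θ⁻¹) with hLdef
  have hL : L ≠ 0 := ne_of_gt hLpos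
  field_simp

private lemma aux_hasDeriv2 {θ : ℝ} (hθ : 0 < θ) :
    HasDerivAt (fun θ : ℝ => -(((θ^2+θ) * Real.log (1+θ⁻¹))⁻¹))
      (((2*θ+1) * Real.log (1+θ⁻¹) - 1) / ((θ^2+θ) * Real.log (1+θ⁻¹))^2) θ := by
  have hθ0 : θ ≠ 0 := ne_of_gt hθ
  have h1 : HasDerivAt (fun θ : ℝ => 1 + θ⁻¹) (-(θ^2)⁻¹) θ := by
    simpa using (hasDerivAt_inv hθ0).const_add 1
  have h1pos : (0:ℝ) < 1 + θ⁻¹ := by positivity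
  have h2 : HasDerivAt (fun θ : ℝ => Real.log (1 + θ⁻¹)) (-(θ^2)⁻¹ / (1+θ⁻¹)) θ :=
    h1.log (ne_of_gt h1pos)
  have hpoly : HasDerivAt (fun θ : ℝ => θ^2 + θ) (2*θ+1) θ := by
    simpa [Pi.add_def] using (hasDerivAt_pow 2 θ).add (hasDerivAt_id' θ)
  have hD : HasDerivAt (fun θ : ℝ => (θ^2+θ) * Real.log (1+θ⁻¹)) _ θ := hpoly.mul h2
  have hDpos : (0:ℝ) < (θ^2+θ) * Real.log (1+θ⁻¹) :=
    mul_pos (by nlinarith) (logpos hθ)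
  have h4 : HasDerivAt (fun θ : ℝ => -(((θ^2+θ) * Real.log (1+θ⁻¹))⁻¹)) _ θ :=
    (hD.inv (ne_of_gt hDpos)).neg
  convert h4 using 1
  have hLpos := logpos hθ
  set L := Real.log (1+θ⁻¹) with hLdef
  have hL : L ≠ 0 := ne_of_gt hLpos
  field_simp
  ring

private lemma aux_convex :
    ConvexOn ℝ (Set.Ioi (0:ℝ)) (fun θ => Real.log (Real.log (1 + θ⁻¹))) := by
  set F : ℝ → ℝ := fun θ => Real.log (Real.log (1 + θ⁻¹)) with hFdef
  set G : ℝ → ℝ := fun θ => -(((θ^2+θ) * Real.log (1+θ⁻¹))⁻¹) with hGdef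
  have hEq : ∀ θ ∈ Set.Ioi (0:ℝ), deriv F θ = G θ := fun θ hθ => (aux_hasDeriv hθ).deriv
  have hdiff : DifferentiableOn ℝ F (Set.Ioi 0) :=
    fun θ hθ => (aux_hasDeriv hθ).differentiableAt.differentiableWithinAt
  refine convexOn_of_deriv2_nonneg (convex_Ioi 0) hdiff.continuousOn ?_ ?_ ?_
  · rwa [interior_Ioi]
  · rw [interior_Ioi]
    intro θ hθ
    have hev : deriv F =ᶠ[nhds θ] G :=
      Filter.eventuallyEq_of_mem (isOpen_Ioi.mem_nhds hθ) hEq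
    have : DifferentiableAt ℝ G θ := (aux_hasDeriv2 hθ).differentiableAt
    exact (hev.differentiableAt_iff.2 this).differentiableWithinAt
  · rw [interior_Ioi]
    intro θ hθ
    have hev : deriv F =ᶠ[nhds θ] G :=
      Filter.eventuallyEq_of_mem (isOpen_Ioi.mem_nhds hθ) hEq
    have h2 : deriv (deriv F) θ = deriv G θ := hev.deriv_eq
    have h3 : deriv G θ =
        ((2*θ+1) * Real.log (1+θ⁻¹) - 1) / ((θ^2+θ) * Real.log (1+θ⁻¹))^2 :=
      (aux_hasDeriv2 hθ).deriv
    show 0 ≤ deriv (deriv F) θ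
    rw [h2, h3]
    apply div_nonneg _ (sq_nonneg _)
    -- key inequality : (2θ+1) log(1+1/θ) ≥ 1
    have hθ' : (0:ℝ) < θ := hθ
    have h1pos : (0:ℝ) < 1 + θ⁻¹ := by positivity
    have hlog := Real.log_le_sub_one_of_pos (inv_pos.2 h1pos)
    rw [Real.log_inv] at hlog
    have hinv : (1+θ⁻¹)⁻¹ = θ/(θ+1) := by
      rw [eq_div_iff (by positivity)]
      field_simp
    rw [hinv] at hlog
    -- hlog : -log(1+θ⁻¹) ≤ θ/(θ+1) - 1
    have hL : (θ+1) * Real.log (1+θ⁻¹) ≥ 1 := by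
      have h5 : Real.log (1+θ⁻¹) ≥ 1 - θ/(θ+1) := by linarith
      have h6 : 1 - θ/(θ+1) = 1/(θ+1) := by field_simp; ring
      rw [h6] at h5
      rw [ge_iff_le, ← div_le_iff₀' (by positivity)]
      simpa [one_div] using h5
    nlinarith [mul_pos hθ' (logpos hθ')]

/-- The function `g(θ, t) = ln(1 + 1/θ)/t` is jointly convex on `{θ > 0, t > 0}`. -/
theorem stmt_6 :
    ConvexOn ℝ (Set.Ioi (0 : ℝ) ×ˢ Set.Ioi (0 : ℝ))
      (fun p : ℝ × ℝ => Real.log (1 + 1 / p.1) / p.2) := by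
  have hs : Convex ℝ (Set.Ioi (0 : ℝ) ×ˢ Set.Ioi (0 : ℝ)) :=
    (convex_Ioi 0).prod (convex_Ioi 0)
  have hF := aux_convex
  have hLog : ConvexOn ℝ (Set.Ioi (0:ℝ)) (fun t : ℝ => -Real.log t) :=
    strictConcaveOn_log_Ioi.concaveOn.neg
  set H : ℝ × ℝ → ℝ := fun p => Real.log (Real.log (1 + p.1⁻¹)) - Real.log p.2 with hHdef
  have hH : ConvexOn ℝ (Set.Ioi (0 : ℝ) ×ˢ Set.Ioi (0 : ℝ)) H := by
    refine ⟨hs, fun p hp q hq a b ha hb hab => ?_⟩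
    have hp1 := (Set.mem_prod.1 hp).1
    have hp2 := (Set.mem_prod.1 hp).2
    have hq1 := (Set.mem_prod.1 hq).1
    have hq2 := (Set.mem_prod.1 hq).2
    have h1 := hF.2 hp1 hq1 ha hb hab
    have h2 := hLog.2 hp2 hq2 ha hb hab
    simp only [smul_eq_mul, hHdef, Prod.smul_fst, Prod.smul_snd, Prod.fst_add, Prod.snd_add] at *
    linarith
  have hExp : ConvexOn ℝ (Set.Ioi (0 : ℝ) ×ˢ Set.Ioi (0 : ℝ)) (fun p => Real.exp (H p)) := by
    refine ⟨hs, fun p hp q hq a b ha hb hab => ?_⟩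
    have h1 := hH.2 hp hq ha hb hab
    have h2 := convexOn_exp.2 (Set.mem_univ (H p)) (Set.mem_univ (H q)) ha hb hab
    simp only [smul_eq_mul] at *
    calc Real.exp (H (a • p + b • q)) ≤ Real.exp (a * H p + b * H q) := Real.exp_le_exp.2 h1
      _ ≤ a * Real.exp (H p) + b * Real.exp (H q) := h2
  refine hExp.congr fun p hp => ?_
  have hp1 : (0:ℝ) < p.1 := (Set.mem_prod.1 hp).1
  have hp2 : (0:ℝ) < p.2 := (Set.mem_prod.1 hp).2
  have hL : (0:ℝ) < Real.log (1 + p.1⁻¹) := logpos hp1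
  simp only [hHdef]
  rw [Real.exp_sub, Real.exp_log hL, Real.exp_log hp2, one_div]
end
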